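/- For all complex numbers a, b and all real p ≥ 2, Re((|b|^{p-2}b − |a|^{p-2}a)·conj(b−a)) ≥ (|b−a|²/2)·(|a|^{p-2} + |b|^{p-2}) ≥ 0, where when a = 0 or b = 0 the corresponding term |a|^{p-2}a or |b|^{p-2}b is interpreted as 0. -/

import Mathlib

theorem re_lower_bound (p : ℝ) (hp : 2 ≤ p) (a b : ℂ) :
    (((‖b‖ ^ (p - 2) : ℝ) * b - (‖a‖ ^ (p - 2) : ℝ) * a) *
        (starRingEnd ℂ) (b - a)).re ≥
      ‖b - a‖ ^ 2 / 2 * (‖a‖ ^ (p - 2) + ‖b‖ ^ (p - 2)) ∧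
    ‖b - a‖ ^ 2 / 2 * (‖a‖ ^ (p - 2) + ‖b‖ ^ (p - 2)) ≥ 0 := by
  have hA0 : 0 ≤ ‖a‖ := norm_nonneg a
  have hB0 : 0 ≤ ‖b‖ := norm_nonneg b
  have hα : 0 ≤ ‖a‖ ^ (p - 2) := Real.rpow_nonneg hA0 _
  have hβ : 0 ≤ ‖b‖ ^ (p - 2) := Real.rpow_nonneg hB0 _
  have key : 0 ≤ ((‖a‖) ^ 2 - (‖b‖) ^ 2) *
      (‖a‖ ^ (p - 2) - ‖b‖ ^ (p - 2)) := by
    rcases le_total (‖a‖) (‖b‖) with h | h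
    · have h2 : ‖a‖ ^ (p - 2) ≤ ‖b‖ ^ (p - 2) :=
        Real.rpow_le_rpow hA0 h (by linarith)
      have h3 : (‖a‖) ^ 2 ≤ (‖b‖) ^ 2 := by nlinarith
      nlinarith
    · have h2 : ‖b‖ ^ (p - 2) ≤ ‖a‖ ^ (p - 2) :=
        Real.rpow_le_rpow hB0 h (by linarith)
      have h3 : (‖b‖) ^ 2 ≤ (‖a‖) ^ 2 := by nlinarith
      nlinarith
  have hA2 : (‖a‖) ^ 2 = a.re ^ 2 + a.im ^ 2 := by
    rw [Complex.sq_norm, Complex.normSq_apply]; ring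
  have hB2 : (‖b‖) ^ 2 = b.re ^ 2 + b.im ^ 2 := by
    rw [Complex.sq_norm, Complex.normSq_apply]; ring
  have habs : (‖b - a‖) ^ 2 = (b.re - a.re) ^ 2 + (b.im - a.im) ^ 2 := by
    rw [Complex.sq_norm, Complex.normSq_apply]; simp; ring
  constructor
  · simp only [Complex.mul_re, Complex.mul_im, Complex.sub_re, Complex.sub_im,
      Complex.conj_re, Complex.conj_im, Complex.ofReal_re, Complex.ofReal_im, habs]
    nlinarith [key, hA2, hB2]
  · have : 0 ≤ (‖b - a‖) ^ 2 := sq_nonneg _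
    positivity
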